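/- arXiv:1011.5358 — 2 statements merged into one kernel-verified Lean document; each statement's English description precedes it below -/
import Mathlib

section
/- Let π be a product of t independent uniformly random reflections in B_n. For i, j ∈ [-n,n]\{0} with j > |i|, P(π(i) > π(j)) = 1/2 - ((j - i - 1 + sgn i)/(2(n-1)))(1 - 2/n)^t + ((j - i - 1 + sgn i)/(2(n-1)) - 1/2)(1 - 4/n + 2/n²)^t. -/
open Classical

/-- The index set `[-n, n] \ {0}` as a finset of integers. -/
noncomputable def signedIdxF (n : ℕ) : Finset ℤ := (Finset.Icc (-(n : ℤ)) n).erase 0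

/-- The type of indices `[-n, n] \ {0}`. -/
abbrev SIdx (n : ℕ) := {x : ℤ // x ∈ signedIdxF n}

/-- Negation on the index set. -/
def negIdx {n : ℕ} (a : SIdx n) : SIdx n :=
  ⟨-a.1, by
    have h := a.2
    simp only [signedIdxF, Finset.mem_erase, Finset.mem_Icc] at h ⊢
    omega⟩

/-- The reflections of `Bₙ` in its signed-permutation representation:
the elements `(i,j)(-i,-j)` with `1 ≤ |i| < j ≤ n` together with
the elements `(i,-i)` with `1 ≤ i ≤ n`. -/
def BRefl (n : ℕ) : Set (Equiv.Perm (SIdx n)) :=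
  {π | (∃ a b : SIdx n, a ≠ b ∧ a ≠ negIdx b ∧
          π = Equiv.swap a b * Equiv.swap (negIdx a) (negIdx b))
     ∨ (∃ a : SIdx n, π = Equiv.swap a (negIdx a))}

/-- The reflections of `Dₙ`: the elements `(i,j)(-i,-j)` with `1 ≤ |i| < j ≤ n`. -/
def DRefl (n : ℕ) : Set (Equiv.Perm (SIdx n)) :=
  {π | ∃ a b : SIdx n, a ≠ b ∧ a ≠ negIdx b ∧
          π = Equiv.swap a b * Equiv.swap (negIdx a) (negIdx b)}

/-- The number of B-inversions: pairs `(i, j)` with `j ≥ |i|` and `π i > π j`. -/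
noncomputable def BLen (n : ℕ) (π : Equiv.Perm (SIdx n)) : ℕ :=
  (Finset.univ.filter (fun p : SIdx n × SIdx n =>
      |p.1.1| ≤ p.2.1 ∧ (π p.2).1 < (π p.1).1)).card

/-- The number of D-inversions: pairs `(i, j)` with `j > |i|` and `π i > π j`. -/
noncomputable def DLen (n : ℕ) (π : Equiv.Perm (SIdx n)) : ℕ :=
  (Finset.univ.filter (fun p : SIdx n × SIdx n =>
      |p.1.1| < p.2.1 ∧ (π p.2).1 < (π p.1).1)).card

/-- The probability that `π i > π j` where `π` is a product of `t` independent
uniformly random reflections in `Bₙ`. -/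
noncomputable def BProbGt (n t : ℕ) (i j : SIdx n) : ℝ :=
  ((Finset.univ.filter (fun f : Fin t → Equiv.Perm (SIdx n) =>
      (∀ k, f k ∈ BRefl n) ∧ ((List.ofFn f).prod j).1 < ((List.ofFn f).prod i).1)).card : ℝ) /
    ((Finset.univ.filter (fun π : Equiv.Perm (SIdx n) => π ∈ BRefl n)).card : ℝ) ^ t

section Aux
/- ## Auxiliary machinery -/

lemma mem_signedIdxF {n : ℕ} {x : ℤ} : x ∈ signedIdxF n ↔ x ≠ 0 ∧ -(n:ℤ) ≤ x ∧ x ≤ n := by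
  simp [signedIdxF, Finset.mem_erase, Finset.mem_Icc, and_assoc]

/-- canonical parameters of reflections -/
noncomputable def PF (n : ℕ) : Finset (ℤ × ℤ) :=
  ((Finset.Icc (-(n:ℤ)) n) ×ˢ (Finset.Icc 1 (n:ℤ))).filter
    (fun p => (p.1 ≠ 0 ∧ -p.2 < p.1 ∧ p.1 < p.2) ∨ p.1 = p.2)

lemma mem_PF {n : ℕ} {p : ℤ × ℤ} : p ∈ PF n ↔
    (-(n:ℤ) ≤ p.1 ∧ p.1 ≤ n ∧ 1 ≤ p.2 ∧ p.2 ≤ n) ∧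
      ((p.1 ≠ 0 ∧ -p.2 < p.1 ∧ p.1 < p.2) ∨ p.1 = p.2) := by
  simp [PF, Finset.mem_filter, Finset.mem_product, Finset.mem_Icc, and_assoc]

/-- value-level action of the reflection with parameter `p` -/
def actZ (p : ℤ × ℤ) (c : ℤ) : ℤ :=
  if p.1 = p.2 then (if c = p.1 then -p.1 else if c = -p.1 then p.1 else c)
  else if c = p.1 then p.2 else if c = p.2 then p.1
    else if c = -p.1 then -p.2 else if c = -p.2 then -p.1 else c

lemma actZ_mem {n : ℕ} {p : ℤ × ℤ} (hp : p ∈ PF n) {c : ℤ} (hc : c ∈ signedIdxF n) :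
    actZ p c ∈ signedIdxF n := by
  rw [mem_PF] at hp; rw [mem_signedIdxF] at hc ⊢
  unfold actZ; split_ifs <;> omega

lemma actZ_invol {n : ℕ} {p : ℤ × ℤ} (hp : p ∈ PF n) (c : ℤ) :
    actZ p (actZ p c) = c := by
  rw [mem_PF] at hp
  unfold actZ; split_ifs <;> omega

lemma actZ_neg {n : ℕ} {p : ℤ × ℤ} (hp : p ∈ PF n) (c : ℤ) :
    actZ p (-c) = -(actZ p c) := by
  rw [mem_PF] at hp
  unfold actZ; split_ifs <;> omega

noncomputable def permOf (n : ℕ) (p : ℤ × ℤ) : Equiv.Perm (SIdx n) :=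
  if h : p ∈ PF n then
    { toFun := fun a => ⟨actZ p a.1, actZ_mem h a.2⟩
      invFun := fun a => ⟨actZ p a.1, actZ_mem h a.2⟩
      left_inv := fun a => Subtype.ext (actZ_invol h a.1)
      right_inv := fun a => Subtype.ext (actZ_invol h a.1) }
  else 1

lemma val_permOf {n : ℕ} {p : ℤ × ℤ} (h : p ∈ PF n) (a : SIdx n) :
    (permOf n p a).1 = actZ p a.1 := by
  rw [permOf, dif_pos h]; rfl

lemma val_negIdx {n : ℕ} (a : SIdx n) : (negIdx a).1 = -a.1 := rfl

lemma val_nonzero {n : ℕ} (a : SIdx n) : a.1 ≠ 0 := (mem_signedIdxF.1 a.2).1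

lemma val_refl2 {n : ℕ} (a c : SIdx n) :
    ((Equiv.swap a (negIdx a)) c).1 =
      if c.1 = a.1 then -a.1 else if c.1 = -a.1 then a.1 else c.1 := by
  have h1 := val_nonzero a
  rw [Equiv.swap_apply_def]
  split_ifs <;> simp only [Subtype.ext_iff, val_negIdx] at * <;> omega

lemma val_refl1 {n : ℕ} (a b c : SIdx n) (hab : a ≠ b) (hab' : a ≠ negIdx b) :
    ((Equiv.swap a b * Equiv.swap (negIdx a) (negIdx b)) c).1 =
      if c.1 = a.1 then b.1 else if c.1 = b.1 then a.1
        else if c.1 = -a.1 then -b.1 else if c.1 = -b.1 then -a.1 else c.1 := by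
  have h1 := val_nonzero a
  have h2 := val_nonzero b
  have h3 : a.1 ≠ b.1 := fun h => hab (Subtype.ext h)
  have h4 : a.1 ≠ -b.1 := fun h => hab' (Subtype.ext h)
  rw [Equiv.Perm.mul_apply, Equiv.swap_apply_def, Equiv.swap_apply_def]
  split_ifs <;> simp only [Subtype.ext_iff, val_negIdx] at * <;> omega

/-- canonical parameter of the reflection sending `a` to `c` -/
def par (a c : ℤ) : ℤ × ℤ :=
  if c = -a then (if 0 < a then (a,a) else (-a,-a))
  else if -c < a ∧ a < c then (a, c)
  else if c < a ∧ a < -c then (-a, -c)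
  else if -a < c ∧ c < a then (c, a)
  else (-c, -a)

lemma par_mem {n : ℕ} {a c : ℤ} (ha : a ∈ signedIdxF n) (hc : c ∈ signedIdxF n)
    (hne : c ≠ a) : par a c ∈ PF n := by
  rw [mem_signedIdxF] at ha hc
  rw [mem_PF]; unfold par; split_ifs <;> dsimp only <;> omega

lemma actZ_par_pair {a c : ℤ} (ha : a ≠ 0) (hc : c ≠ 0) (h1 : c ≠ a) (h2 : c ≠ -a) (d : ℤ) :
    actZ (par a c) d =
      if d = a then c else if d = c then a
        else if d = -a then -c else if d = -c then -a else d := by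
  unfold par
  rw [if_neg (by omega)]
  by_cases hlt : -c < a ∧ a < c
  · rw [if_pos hlt]; unfold actZ; dsimp only; split_ifs <;> omega
  · rw [if_neg hlt]
    by_cases h3 : c < a ∧ a < -c
    · rw [if_pos h3]; unfold actZ; dsimp only; split_ifs <;> omega
    · rw [if_neg h3]
      by_cases h4 : -a < c ∧ c < a
      · rw [if_pos h4]; unfold actZ; dsimp only; split_ifs <;> omega
      · rw [if_neg h4]; unfold actZ; dsimp only; split_ifs <;> omega

lemma actZ_par_self {a : ℤ} (ha : a ≠ 0) (d : ℤ) :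
    actZ (par a (-a)) d = if d = a then -a else if d = -a then a else d := by
  unfold par
  rw [if_pos rfl]
  by_cases h : 0 < a
  · rw [if_pos h]; unfold actZ; dsimp only; split_ifs <;> omega
  · rw [if_neg h]; unfold actZ; dsimp only; split_ifs <;> omega

lemma par_act {n : ℕ} {a : ℤ} {p : ℤ × ℤ} (hp : p ∈ PF n) (ha : a ∈ signedIdxF n)
    (h : actZ p a ≠ a) : par a (actZ p a) = p := by
  obtain ⟨p1, p2⟩ := p
  rw [mem_PF] at hp; rw [mem_signedIdxF] at ha
  dsimp only at hp
  generalize hc : actZ (p1, p2) a = c at h ⊢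
  unfold actZ at hc; dsimp only at hc
  split_ifs at hc <;>
    (unfold par; split_ifs <;> simp only [Prod.mk.injEq] <;> omega)

set_option maxHeartbeats 2000000 in
lemma permOf_injOn {n : ℕ} : Set.InjOn (permOf n) (PF n) := by
  intro p hp q hq hpq
  have H : ∀ c ∈ signedIdxF n, actZ p c = actZ q c := by
    intro c hc
    have := congrArg (fun π : Equiv.Perm (SIdx n) => (π ⟨c, hc⟩).1) hpq
    simpa [val_permOf hp, val_permOf hq] using this
  have hp' := mem_PF.1 hp
  have hq' := mem_PF.1 hq
  have h1 : actZ p p.2 = actZ q p.2 := H p.2 (mem_signedIdxF.2 (by omega))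
  have h2 : actZ p q.2 = actZ q q.2 := H q.2 (mem_signedIdxF.2 (by omega))
  rw [Prod.ext_iff]
  unfold actZ at h1 h2; split_ifs at h1 h2 <;> omega

lemma ReflF_eq_image (n : ℕ) :
    (Finset.univ.filter (fun π : Equiv.Perm (SIdx n) => π ∈ BRefl n)) =
      (PF n).image (permOf n) := by
  ext r
  simp only [Finset.mem_filter, Finset.mem_univ, true_and, Finset.mem_image]
  constructor
  · rintro (⟨a, b, hab, hab', rfl⟩ | ⟨a, rfl⟩)
    · have h3 : a.1 ≠ b.1 := fun h => hab (Subtype.ext h)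
      have h4 : a.1 ≠ -b.1 := fun h => hab' (Subtype.ext h)
      refine ⟨par a.1 b.1, par_mem a.2 b.2 (by omega), ?_⟩
      refine Equiv.ext fun c => Subtype.ext ?_
      rw [val_permOf (par_mem a.2 b.2 (by omega)),
        actZ_par_pair (val_nonzero a) (val_nonzero b) (by omega) (by omega),
        val_refl1 a b c hab hab']
    · have hne : (-a.1) ≠ a.1 := by have := val_nonzero a; omega
      have hmem : par a.1 (-a.1) ∈ PF n := par_mem a.2 (negIdx a).2 hne
      refine ⟨par a.1 (-a.1), hmem, ?_⟩
      refine Equiv.ext fun c => Subtype.ext ?_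
      rw [val_permOf hmem, actZ_par_self (val_nonzero a), val_refl2 a c]
  · rintro ⟨p, hp, rfl⟩
    have hp' := mem_PF.1 hp
    by_cases hd : p.1 = p.2
    · refine Or.inr ⟨⟨p.1, mem_signedIdxF.2 (by omega)⟩, ?_⟩
      refine Equiv.ext fun c => Subtype.ext ?_
      rw [val_permOf hp, val_refl2]
      dsimp only
      unfold actZ; split_ifs <;> omega
    · have hm1 : p.1 ∈ signedIdxF n := mem_signedIdxF.2 (by omega)
      have hm2 : p.2 ∈ signedIdxF n := mem_signedIdxF.2 (by omega)
      have hab : (⟨p.1, hm1⟩ : SIdx n) ≠ ⟨p.2, hm2⟩ := by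
        simp only [ne_eq, Subtype.mk.injEq]; omega
      have hab' : (⟨p.1, hm1⟩ : SIdx n) ≠ negIdx ⟨p.2, hm2⟩ := by
        simp only [ne_eq, Subtype.ext_iff, val_negIdx]; omega
      refine Or.inl ⟨_, _, hab, hab', ?_⟩
      refine Equiv.ext fun c => Subtype.ext ?_
      rw [val_permOf hp, val_refl1 _ _ c hab hab']
      dsimp only
      unfold actZ; split_ifs <;> omega

lemma sum_range_odd (n : ℕ) : ∑ k ∈ Finset.range n, (2*k+1) = n^2 := by
  induction n with
  | zero => simp
  | succ m ih => rw [Finset.sum_range_succ, ih]; ring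

lemma sum_Icc_odd (n : ℕ) : ∑ y ∈ Finset.Icc (1:ℤ) (n:ℤ), (2*y-1).toNat = n^2 := by
  rw [← sum_range_odd n]
  refine Finset.sum_nbij' (fun y => (y-1).toNat) (fun k => (k:ℤ)+1) ?_ ?_ ?_ ?_ ?_ <;>
    intros a ha <;>
    simp only [Finset.mem_Icc, Finset.mem_range] at * <;> omega

lemma card_PF (n : ℕ) : (PF n).card = n^2 := by
  have hrw : PF n = (Finset.Icc (1:ℤ) (n:ℤ)).biUnion
      (fun y => (insert y ((Finset.Ioo (-y) y).erase 0)).image (fun x => (x, y))) := by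
    ext ⟨p1, p2⟩
    simp only [mem_PF, Finset.mem_biUnion, Finset.mem_image, Finset.mem_insert,
      Finset.mem_erase, Finset.mem_Ioo, Finset.mem_Icc, Prod.mk.injEq]
    constructor
    · rintro ⟨h1, h2⟩; exact ⟨p2, by omega, p1, by omega, rfl, rfl⟩
    · rintro ⟨y, hy, x, hx, rfl, rfl⟩; omega
  rw [hrw, Finset.card_biUnion]
  · rw [← sum_Icc_odd n]
    refine Finset.sum_congr rfl fun y hy => ?_
    rw [Finset.mem_Icc] at hy
    rw [Finset.card_image_of_injective _ (fun x x' h => by injection h),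
      Finset.card_insert_of_notMem (by simp), Finset.card_erase_of_mem (by
        simp only [Finset.mem_Ioo]; omega), Int.card_Ioo]
    omega
  · intro y hy z hz hyz
    simp only [Finset.disjoint_left, Finset.mem_image]
    rintro p ⟨x, hx, rfl⟩ ⟨x', hx', h⟩
    exact hyz (by injection h with h1 h2; omega)

lemma actZ_par_fst {a c : ℤ} (ha : a ≠ 0) (hc : c ≠ 0) (hne : c ≠ a) :
    actZ (par a c) a = c := by
  by_cases h : c = -a
  · subst h; rw [actZ_par_self ha]; simp
  · rw [actZ_par_pair ha hc hne h]; simp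

lemma actZ_par_other {a c d : ℤ} (ha : a ≠ 0) (hc : c ≠ 0) (hne : c ≠ a)
    (h1 : d ≠ a) (h2 : d ≠ c) (h3 : d ≠ -a) (h4 : d ≠ -c) :
    actZ (par a c) d = d := by
  by_cases h : c = -a
  · subst h; rw [actZ_par_self ha]; split_ifs <;> omega
  · rw [actZ_par_pair ha hc hne h]; split_ifs <;> omega

section Master

/-- sum over reflections moving `a` but fixing `b` -/
lemma sum_touchA {n : ℕ} {a b : ℤ} (ha : a ∈ signedIdxF n) (hb : b ∈ signedIdxF n)
    (hab : a ≠ b) (hab' : a ≠ -b) (F : ℤ → ℤ) :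
    ∑ p ∈ (PF n).filter (fun p => actZ p a ≠ a ∧ actZ p b = b), F (actZ p a) =
      ∑ c ∈ (signedIdxF n).filter (fun c => c ≠ a ∧ c ≠ b ∧ c ≠ -b), F c := by
  have ha0 : a ≠ 0 := (mem_signedIdxF.1 ha).1
  have hb0 : b ≠ 0 := (mem_signedIdxF.1 hb).1
  refine Finset.sum_nbij' (fun p => actZ p a) (fun c => par a c) ?_ ?_ ?_ ?_ ?_
  · intro p hp
    rw [Finset.mem_filter] at hp ⊢
    obtain ⟨hp, hpa, hpb⟩ := hp
    refine ⟨actZ_mem hp ha, hpa, ?_, ?_⟩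
    · intro h
      have := actZ_invol hp a
      rw [h, hpb] at this; exact hab this.symm
    · intro h
      have h2 := actZ_invol hp a
      rw [h] at h2
      have h3 := actZ_neg hp b
      rw [h2] at h3
      rw [hpb] at h3
      exact hab' (by omega)
  · intro c hc
    rw [Finset.mem_filter] at hc ⊢
    obtain ⟨hc, hca, hcb, hcb'⟩ := hc
    have hc0 : c ≠ 0 := (mem_signedIdxF.1 hc).1
    refine ⟨par_mem ha hc hca, ?_, ?_⟩
    · rw [actZ_par_fst ha0 hc0 hca]; exact hca
    · exact actZ_par_other ha0 hc0 hca (Ne.symm hab) (fun h => hcb h.symm)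
        (by omega) (by omega)
  · intro p hp
    rw [Finset.mem_filter] at hp
    exact par_act hp.1 ha hp.2.1
  · intro c hc
    rw [Finset.mem_filter] at hc
    exact actZ_par_fst ha0 (mem_signedIdxF.1 hc.1).1 hc.2.1
  · intro p hp; rfl

/-- the reflections moving both `a` and `b` -/
lemma filter_touchAB {n : ℕ} {a b : ℤ} (ha : a ∈ signedIdxF n) (hb : b ∈ signedIdxF n)
    (hab : a ≠ b) (hab' : a ≠ -b) :
    (PF n).filter (fun p => actZ p a ≠ a ∧ actZ p b ≠ b) = {par a b, par a (-b)} := by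
  have ha0 : a ≠ 0 := (mem_signedIdxF.1 ha).1
  have hb0 : b ≠ 0 := (mem_signedIdxF.1 hb).1
  have ha' := mem_signedIdxF.1 ha
  have hb' := mem_signedIdxF.1 hb
  ext p
  rw [Finset.mem_filter, Finset.mem_insert, Finset.mem_singleton]
  constructor
  · rintro ⟨hp, h1, h2⟩
    have hkey : actZ p a = b ∨ actZ p a = -b := by
      have hp' := mem_PF.1 hp
      unfold actZ at h1 h2 ⊢
      split_ifs at h1 h2 ⊢ <;> omega
    rcases hkey with h | h
    · have h3 := par_act hp ha h1
      rw [h] at h3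
      exact Or.inl h3.symm
    · have h3 := par_act hp ha h1
      rw [h] at h3
      exact Or.inr h3.symm
  · have hmb : -b ∈ signedIdxF n := mem_signedIdxF.2 (by omega)
    rintro (rfl | rfl)
    · refine ⟨par_mem ha hb (Ne.symm hab), ?_, ?_⟩
      · rw [actZ_par_fst ha0 hb0 (Ne.symm hab)]; exact Ne.symm hab
      · have h2 := actZ_invol (par_mem ha hb (Ne.symm hab)) a
        rw [actZ_par_fst ha0 hb0 (Ne.symm hab)] at h2
        rw [h2]; exact hab
    · have hne : -b ≠ a := fun h => hab' (by omega)
      refine ⟨par_mem ha hmb hne, ?_, ?_⟩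
      · rw [actZ_par_fst ha0 (by omega) hne]; exact hne
      · have h2 := actZ_invol (par_mem ha hmb hne) a
        rw [actZ_par_fst ha0 (by omega) hne] at h2
        have h3 := actZ_neg (par_mem ha hmb hne) (-b)
        rw [h2] at h3
        simp only [neg_neg] at h3
        rw [h3]
        intro h; exact hab (by omega)

end Master

lemma card_U (n : ℕ) : (signedIdxF n).card = 2*n := by
  rw [signedIdxF, Finset.card_erase_of_mem (by simp [Finset.mem_Icc]), Int.card_Icc]
  omega

lemma sum_filter3 {n : ℕ} {a b : ℤ} (ha : a ∈ signedIdxF n) (hb : b ∈ signedIdxF n)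
    (hab : a ≠ b) (hab' : a ≠ -b) (f : ℤ → ℤ) :
    ∑ c ∈ (signedIdxF n).filter (fun c => c ≠ a ∧ c ≠ b ∧ c ≠ -b), f c =
      ∑ c ∈ signedIdxF n, f c - f a - f b - f (-b) := by
  have ha' := mem_signedIdxF.1 ha
  have hb' := mem_signedIdxF.1 hb
  have hmb : -b ∈ signedIdxF n := mem_signedIdxF.2 (by omega)
  have hrw : (signedIdxF n).filter (fun c => c ≠ a ∧ c ≠ b ∧ c ≠ -b) =
      (((signedIdxF n).erase a).erase b).erase (-b) := by
    ext c
    simp only [Finset.mem_filter, Finset.mem_erase]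
    tauto
  rw [hrw]
  rw [← Finset.sum_erase_add _ f (show a ∈ signedIdxF n from ha)]
  rw [← Finset.sum_erase_add _ f (show b ∈ (signedIdxF n).erase a from
    Finset.mem_erase.2 ⟨Ne.symm hab, hb⟩)]
  rw [← Finset.sum_erase_add _ f (show -b ∈ ((signedIdxF n).erase a).erase b from
    Finset.mem_erase.2 ⟨by omega, Finset.mem_erase.2 ⟨by omega, hmb⟩⟩)]
  ring

set_option maxHeartbeats 3000000 in
lemma master {n : ℕ} {a b : ℤ} (ha : a ∈ signedIdxF n) (hb : b ∈ signedIdxF n)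
    (hab : a ≠ b) (hab' : a ≠ -b) (F : ℤ → ℤ → ℤ) :
    ∑ p ∈ PF n, F (actZ p a) (actZ p b)
      = ((n:ℤ)-2)^2 * F a b
        + ∑ c ∈ (signedIdxF n).filter (fun c => c ≠ a ∧ c ≠ b ∧ c ≠ -b), F c b
        + ∑ c ∈ (signedIdxF n).filter (fun c => c ≠ b ∧ c ≠ a ∧ c ≠ -a), F a c
        + F b a + F (-b) (-a) := by
  classical
  have ha' := mem_signedIdxF.1 ha
  have hb' := mem_signedIdxF.1 hb
  have hn2 : 2 ≤ n := by omega
  have hba : b ≠ a := Ne.symm hab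
  have hba' : b ≠ -a := fun h => hab' (by omega)
  set G := fun p => F (actZ p a) (actZ p b) with hG
  -- four-way split
  have split1 := Finset.sum_filter_add_sum_filter_not (PF n) (fun p => actZ p b = b) G
  have split2 := Finset.sum_filter_add_sum_filter_not
    ((PF n).filter (fun p => actZ p b = b)) (fun p => actZ p a = a) G
  have split3 := Finset.sum_filter_add_sum_filter_not
    ((PF n).filter (fun p => ¬actZ p b = b)) (fun p => actZ p a = a) G
  rw [Finset.filter_filter, Finset.filter_filter] at split2 split3
  -- K0 : fix both
  have hK0 : ∑ p ∈ (PF n).filter (fun p => actZ p b = b ∧ actZ p a = a), G p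
      = ((PF n).filter (fun p => actZ p b = b ∧ actZ p a = a)).card • F a b := by
    rw [← Finset.sum_const]
    refine Finset.sum_congr rfl fun p hp => ?_
    obtain ⟨-, h1, h2⟩ := Finset.mem_filter.1 hp
    simp only [hG, h1, h2]
  -- K2 : move a, fix b
  have hK2 : ∑ p ∈ (PF n).filter (fun p => actZ p b = b ∧ ¬actZ p a = a), G p
      = ∑ c ∈ (signedIdxF n).filter (fun c => c ≠ a ∧ c ≠ b ∧ c ≠ -b), F c b := by
    have hset : (PF n).filter (fun p => actZ p b = b ∧ ¬actZ p a = a)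
        = (PF n).filter (fun p => actZ p a ≠ a ∧ actZ p b = b) := by
      apply Finset.filter_congr; intros; tauto
    rw [hset, ← sum_touchA ha hb hab hab' (fun c => F c b)]
    refine Finset.sum_congr rfl fun p hp => ?_
    obtain ⟨-, -, h2⟩ := Finset.mem_filter.1 hp
    simp only [hG, h2]
  -- K3 : move b, fix a
  have hK3 : ∑ p ∈ (PF n).filter (fun p => ¬actZ p b = b ∧ actZ p a = a), G p
      = ∑ c ∈ (signedIdxF n).filter (fun c => c ≠ b ∧ c ≠ a ∧ c ≠ -a), F a c := by
    have hset : (PF n).filter (fun p => ¬actZ p b = b ∧ actZ p a = a)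
        = (PF n).filter (fun p => actZ p b ≠ b ∧ actZ p a = a) := by
      apply Finset.filter_congr; intros; tauto
    rw [hset, ← sum_touchA hb ha hba hba' (fun c => F a c)]
    refine Finset.sum_congr rfl fun p hp => ?_
    obtain ⟨-, -, h2⟩ := Finset.mem_filter.1 hp
    simp only [hG, h2]
  -- K4 : move both
  have ha0 : a ≠ 0 := ha'.1
  have hb0 : b ≠ 0 := hb'.1
  have e1 : actZ (par a b) a = b := actZ_par_fst ha0 hb0 hba
  have e2 : actZ (par a b) b = a := by
    have h2 := actZ_invol (par_mem ha hb hba) a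
    rwa [e1] at h2
  have hmb : -b ∈ signedIdxF n := mem_signedIdxF.2 (by omega)
  have hnba : -b ≠ a := fun h => hab' (by omega)
  have e3 : actZ (par a (-b)) a = -b := actZ_par_fst ha0 (by omega) hnba
  have e4 : actZ (par a (-b)) b = -a := by
    have h2 := actZ_invol (par_mem ha hmb hnba) a
    rw [e3] at h2
    have h3 := actZ_neg (par_mem ha hmb hnba) (-b)
    rw [h2] at h3
    simp only [neg_neg] at h3
    omega
  have hpairne : par a b ≠ par a (-b) := by
    intro h
    have := e1
    rw [h, e3] at this
    omega
  have hK4 : ∑ p ∈ (PF n).filter (fun p => ¬actZ p b = b ∧ ¬actZ p a = a), G p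
      = F b a + F (-b) (-a) := by
    have hset : (PF n).filter (fun p => ¬actZ p b = b ∧ ¬actZ p a = a)
        = {par a b, par a (-b)} := by
      rw [← filter_touchAB ha hb hab hab']
      apply Finset.filter_congr; intros; tauto
    rw [hset, Finset.sum_pair hpairne]
    simp only [hG, e1, e2, e3, e4]
  -- cardinality of K0
  have hcardUa : (((signedIdxF n).filter (fun c => c ≠ a ∧ c ≠ b ∧ c ≠ -b)).card : ℤ)
      = 2*(n:ℤ) - 3 := by
    have := sum_filter3 ha hb hab hab' (fun _ => (1:ℤ))
    simp only [Finset.sum_const, nsmul_eq_mul, mul_one] at this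
    rw [this, card_U]
    push_cast; ring
  have hcardUb : (((signedIdxF n).filter (fun c => c ≠ b ∧ c ≠ a ∧ c ≠ -a)).card : ℤ)
      = 2*(n:ℤ) - 3 := by
    have := sum_filter3 hb ha hba hba' (fun _ => (1:ℤ))
    simp only [Finset.sum_const, nsmul_eq_mul, mul_one] at this
    rw [this, card_U]
    push_cast; ring
  have hcardK2 : (((PF n).filter (fun p => actZ p b = b ∧ ¬actZ p a = a)).card : ℤ)
      = 2*(n:ℤ) - 3 := by
    have hset : (PF n).filter (fun p => actZ p b = b ∧ ¬actZ p a = a)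
        = (PF n).filter (fun p => actZ p a ≠ a ∧ actZ p b = b) := by
      apply Finset.filter_congr; intros; tauto
    have h1 := sum_touchA ha hb hab hab' (fun _ => (1:ℤ))
    simp only [Finset.sum_const, nsmul_eq_mul, mul_one] at h1
    rw [hset]
    rw [h1, hcardUa]
  have hcardK3 : (((PF n).filter (fun p => ¬actZ p b = b ∧ actZ p a = a)).card : ℤ)
      = 2*(n:ℤ) - 3 := by
    have hset : (PF n).filter (fun p => ¬actZ p b = b ∧ actZ p a = a)
        = (PF n).filter (fun p => actZ p b ≠ b ∧ actZ p a = a) := by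
      apply Finset.filter_congr; intros; tauto
    have h1 := sum_touchA hb ha hba hba' (fun _ => (1:ℤ))
    simp only [Finset.sum_const, nsmul_eq_mul, mul_one] at h1
    rw [hset, h1, hcardUb]
  have hcardK4 : (((PF n).filter (fun p => ¬actZ p b = b ∧ ¬actZ p a = a)).card : ℤ) = 2 := by
    have hset : (PF n).filter (fun p => ¬actZ p b = b ∧ ¬actZ p a = a)
        = {par a b, par a (-b)} := by
      rw [← filter_touchAB ha hb hab hab']
      apply Finset.filter_congr; intros; tauto
    rw [hset, Finset.card_insert_of_notMem (by simpa using hpairne), Finset.card_singleton]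
    norm_num
  have hcards := Finset.card_filter_add_card_filter_not
    (s := PF n) (p := fun p => actZ p b = b)
  have hcards2 := Finset.card_filter_add_card_filter_not
    (s := (PF n).filter (fun p => actZ p b = b)) (p := fun p => actZ p a = a)
  have hcards3 := Finset.card_filter_add_card_filter_not
    (s := (PF n).filter (fun p => ¬actZ p b = b)) (p := fun p => actZ p a = a)
  rw [Finset.filter_filter, Finset.filter_filter] at hcards2 hcards3
  have hK0card : (((PF n).filter (fun p => actZ p b = b ∧ actZ p a = a)).card : ℤ)
      = ((n:ℤ)-2)^2 := by
    have hpf := card_PF n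
    have e : ((n:ℤ)-2)^2 = (n:ℤ)^2 - (2*n-3) - (2*n-3) - 2 := by ring
    rw [e]
    have : (((n:ℕ)^2 : ℕ) : ℤ) = ((n:ℤ))^2 := by push_cast; ring
    omega
  -- assemble
  rw [← split1, ← split2, ← split3, hK0, hK2, hK3, hK4]
  rw [nsmul_eq_mul, hK0card]
  ring

/-- `mm c = c - sign c` -/
def mm (c : ℤ) : ℤ := if 0 < c then c - 1 else c + 1

/-- indicator of `x > y` -/
def ind (x y : ℤ) : ℤ := if y < x then 1 else 0

lemma mm_neg {a : ℤ} (h : a ≠ 0) : mm (-a) = -mm a := by unfold mm; split_ifs <;> omega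

lemma sum_mm (n : ℕ) : ∑ c ∈ signedIdxF n, mm c = 0 := by
  refine Finset.sum_involution (fun c _ => -c) ?_ ?_ ?_ ?_
  · intro c hc
    have := (mem_signedIdxF.1 hc).1
    rw [mm_neg this]; ring
  · intro c hc h
    have h0 := (mem_signedIdxF.1 hc).1
    show -c ≠ c
    omega
  · intro c hc
    show -c ∈ signedIdxF n
    rw [mem_signedIdxF] at hc ⊢
    omega
  · intro c hc
    show - -c = c
    ring

lemma sum_ind_left {n : ℕ} {b : ℤ} (hb : b ∈ signedIdxF n) :
    ∑ c ∈ signedIdxF n, ind c b = if 0 < b then (n:ℤ) - b else (n:ℤ) - b - 1 := by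
  have hb' := mem_signedIdxF.1 hb
  unfold ind
  rw [Finset.sum_boole]
  have hrw : (signedIdxF n).filter (fun c => b < c) = (Finset.Ioc b (n:ℤ)).erase 0 := by
    ext c
    simp only [Finset.mem_filter, mem_signedIdxF, Finset.mem_erase, Finset.mem_Ioc]
    omega
  rw [hrw]
  by_cases h : 0 < b
  · rw [Finset.erase_eq_of_notMem (by simp only [Finset.mem_Ioc]; omega), if_pos h,
      Int.card_Ioc]
    omega
  · rw [Finset.card_erase_of_mem (by simp only [Finset.mem_Ioc]; omega), if_neg h,
      Int.card_Ioc]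
    omega

lemma sum_ind_right {n : ℕ} {a : ℤ} (ha : a ∈ signedIdxF n) :
    ∑ c ∈ signedIdxF n, ind a c = if 0 < a then (n:ℤ) + a - 1 else (n:ℤ) + a := by
  have ha' := mem_signedIdxF.1 ha
  unfold ind
  rw [Finset.sum_boole]
  have hrw : (signedIdxF n).filter (fun c => c < a) = (Finset.Ico (-(n:ℤ)) a).erase 0 := by
    ext c
    simp only [Finset.mem_filter, mem_signedIdxF, Finset.mem_erase, Finset.mem_Ico]
    omega
  rw [hrw]
  by_cases h : 0 < a
  · rw [Finset.card_erase_of_mem (by simp only [Finset.mem_Ico]; omega), if_pos h,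
      Int.card_Ico]
    omega
  · rw [Finset.erase_eq_of_notMem (by simp only [Finset.mem_Ico]; omega), if_neg h,
      Int.card_Ico]
    omega

lemma L1 {n : ℕ} {a b : ℤ} (ha : a ∈ signedIdxF n) (hb : b ∈ signedIdxF n)
    (hab : a ≠ b) (hab' : a ≠ -b) :
    ∑ p ∈ PF n, (mm (actZ p b) - mm (actZ p a)) = ((n:ℤ)^2 - 2*n) * (mm b - mm a) := by
  have ha' := mem_signedIdxF.1 ha
  have hb' := mem_signedIdxF.1 hb
  have hba : b ≠ a := Ne.symm hab
  have hba' : b ≠ -a := fun h => hab' (by omega)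
  have H := master ha hb hab hab' (fun x y => mm y - mm x)
  rw [H, sum_filter3 ha hb hab hab' (fun c => mm b - mm c),
    sum_filter3 hb ha hba hba' (fun c => mm c - mm a)]
  simp only [Finset.sum_sub_distrib, sum_mm, Finset.sum_const, card_U, nsmul_eq_mul,
    mm_neg ha'.1, mm_neg hb'.1]
  push_cast
  ring

set_option maxHeartbeats 2000000 in
lemma L2 {n : ℕ} {a b : ℤ} (ha : a ∈ signedIdxF n) (hb : b ∈ signedIdxF n)
    (hab : a ≠ b) (hab' : a ≠ -b) :
    ∑ p ∈ PF n, ind (actZ p a) (actZ p b)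
      = ((n:ℤ)^2 - 4*n + 2) * ind a b + (2*(n:ℤ) - 1) - (mm b - mm a) := by
  have ha' := mem_signedIdxF.1 ha
  have hb' := mem_signedIdxF.1 hb
  have hba : b ≠ a := Ne.symm hab
  have hba' : b ≠ -a := fun h => hab' (by omega)
  have H := master ha hb hab hab' ind
  rw [H, sum_filter3 ha hb hab hab' (fun c => ind c b),
    sum_filter3 hb ha hba hba' (fun c => ind a c),
    sum_ind_left hb, sum_ind_right ha,
    show ((n:ℤ)-2)^2 = (n:ℤ)^2-4*n+4 from by ring]
  clear H
  generalize (n:ℤ)^2 = N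
  unfold ind mm
  split_ifs <;> omega

noncomputable def EC (n t : ℕ) (a b : SIdx n) : ℕ :=
  (Finset.univ.filter (fun f : Fin t → Equiv.Perm (SIdx n) =>
      (∀ k, f k ∈ BRefl n) ∧ ((List.ofFn f).prod b).1 < ((List.ofFn f).prod a).1)).card

lemma EC_zero {n : ℕ} (a b : SIdx n) :
    EC n 0 a b = if b.1 < a.1 then 1 else 0 := by
  classical
  rw [EC, Finset.univ_unique, Finset.filter_singleton]
  by_cases h : b.1 < a.1
  · rw [if_pos ⟨fun k => k.elim0, by simpa using h⟩, if_pos h, Finset.card_singleton]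
  · rw [if_neg (fun hc => h (by simpa using hc.2)), if_neg h, Finset.card_empty]

lemma prod_snoc {n t : ℕ} (f : Fin t → Equiv.Perm (SIdx n)) (r : Equiv.Perm (SIdx n))
    (x : SIdx n) : (List.ofFn (Fin.snoc f r)).prod x = (List.ofFn f).prod (r x) := by
  rw [List.ofFn_succ' (Fin.snoc f r)]
  simp only [Fin.snoc_last, Fin.snoc_castSucc, List.prod_concat, Equiv.Perm.mul_apply]

lemma EC_succ (n t : ℕ) (a b : SIdx n) :
    EC n (t+1) a b = ∑ p ∈ PF n, EC n t (permOf n p a) (permOf n p b) := by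
  classical
  have hmap : ∀ f ∈ (Finset.univ.filter (fun f : Fin (t+1) → Equiv.Perm (SIdx n) =>
      (∀ k, f k ∈ BRefl n) ∧ ((List.ofFn f).prod b).1 < ((List.ofFn f).prod a).1)),
      f (Fin.last t) ∈ Finset.univ.filter (fun π : Equiv.Perm (SIdx n) => π ∈ BRefl n) := by
    intro f hf
    rw [Finset.mem_filter] at hf ⊢
    exact ⟨Finset.mem_univ _, hf.2.1 _⟩
  rw [EC, Finset.card_eq_sum_card_fiberwise hmap, ReflF_eq_image,
    Finset.sum_image (fun p hp q hq h => permOf_injOn hp hq h)]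
  refine Finset.sum_congr rfl fun p hp => ?_
  rw [EC]
  refine Finset.card_nbij' (fun f => Fin.init f) (fun f' => Fin.snoc f' (permOf n p))
    ?_ ?_ ?_ ?_
  · intro f hf
    obtain ⟨hf1, hlast⟩ := Finset.mem_filter.1 hf
    obtain ⟨-, hall, hev⟩ := Finset.mem_filter.1 hf1
    rw [Finset.mem_coe, Finset.mem_filter]
    dsimp only
    refine ⟨Finset.mem_univ _, fun k => hall _, ?_⟩
    have hsn : Fin.snoc (Fin.init f) (f (Fin.last t)) = f := Fin.snoc_init_self f
    have h1 : (List.ofFn f).prod b = (List.ofFn (Fin.init f)).prod (permOf n p b) := by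
      conv_lhs => rw [← hsn]
      rw [prod_snoc, hlast]
    have h2 : (List.ofFn f).prod a = (List.ofFn (Fin.init f)).prod (permOf n p a) := by
      conv_lhs => rw [← hsn]
      rw [prod_snoc, hlast]
    rw [← h1, ← h2]
    exact hev
  · intro f' hf'
    rw [Finset.mem_coe, Finset.mem_filter] at hf' ⊢
    dsimp only
    obtain ⟨-, hall, hev⟩ := hf'
    have hperm : permOf n p ∈ BRefl n := by
      have : permOf n p ∈ (PF n).image (permOf n) := Finset.mem_image_of_mem _ hp
      rw [← ReflF_eq_image] at this
      exact (Finset.mem_filter.1 this).2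
    refine ⟨Finset.mem_filter.2 ⟨Finset.mem_univ _, ?_, ?_⟩, ?_⟩
    · intro k
      refine Fin.lastCases ?_ ?_ k
      · rw [Fin.snoc_last]; exact hperm
      · intro i; rw [Fin.snoc_castSucc]; exact hall i
    · rw [prod_snoc, prod_snoc]
      exact hev
    · exact Fin.snoc_last _ _
  · intro f hf
    dsimp only
    rw [← (Finset.mem_filter.1 hf).2]
    exact Fin.snoc_init_self f
  · intro f' hf'
    dsimp only
    exact Fin.init_snoc _ _

lemma main_formula {n : ℕ} (hn : 2 ≤ n) :
    ∀ t : ℕ, ∀ a b : SIdx n, a.1 ≠ b.1 → a.1 ≠ -b.1 →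
    (EC n t a b : ℝ) * (2*((n:ℝ)-1)) =
      ((n:ℝ)^2)^t * ((n:ℝ)-1)
      - ((n:ℝ)^2-2*(n:ℝ))^t * ((mm b.1 - mm a.1 : ℤ) : ℝ)
      + ((n:ℝ)^2-4*(n:ℝ)+2)^t *
          (2*((n:ℝ)-1)*((ind a.1 b.1 : ℤ):ℝ) - ((n:ℝ)-1)
            + ((mm b.1 - mm a.1 : ℤ) : ℝ)) := by
  intro t
  induction t with
  | zero =>
    intro a b h1 h2
    rw [EC_zero]
    unfold ind
    by_cases h : b.1 < a.1
    · rw [if_pos h, if_pos h]; push_cast; ring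
    · rw [if_neg h, if_neg h]; push_cast; ring
  | succ t IH =>
    intro a b h1 h2
    have hki : ∀ p ∈ PF n, (permOf n p a).1 ≠ (permOf n p b).1 := by
      intro p hp h
      rw [val_permOf hp, val_permOf hp] at h
      have h5 := congrArg (actZ p) h
      rw [actZ_invol hp, actZ_invol hp] at h5
      exact h1 h5
    have hki2 : ∀ p ∈ PF n, (permOf n p a).1 ≠ -(permOf n p b).1 := by
      intro p hp h
      rw [val_permOf hp, val_permOf hp, ← actZ_neg hp] at h
      have h5 := congrArg (actZ p) h
      rw [actZ_invol hp, actZ_invol hp] at h5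
      exact h2 h5
    have hrec : ((EC n (t+1) a b : ℝ)) =
        ∑ p ∈ PF n, (EC n t (permOf n p a) (permOf n p b) : ℝ) := by
      rw [EC_succ]; push_cast; rfl
    have hsummand : ∀ p ∈ PF n,
        (EC n t (permOf n p a) (permOf n p b) : ℝ) * (2*((n:ℝ)-1)) =
          ((n:ℝ)^2)^t * ((n:ℝ)-1)
          - ((n:ℝ)^2-2*(n:ℝ))^t * ((mm (actZ p b.1) - mm (actZ p a.1) : ℤ):ℝ)
          + ((n:ℝ)^2-4*(n:ℝ)+2)^t *
              (2*((n:ℝ)-1)*((ind (actZ p a.1) (actZ p b.1) : ℤ):ℝ) - ((n:ℝ)-1)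
                + ((mm (actZ p b.1) - mm (actZ p a.1) : ℤ):ℝ)) := by
      intro p hp
      rw [IH _ _ (hki p hp) (hki2 p hp), val_permOf hp, val_permOf hp]
    have hx : ∑ p ∈ PF n, ((mm (actZ p b.1) - mm (actZ p a.1) : ℤ):ℝ)
        = ((n:ℝ)^2-2*(n:ℝ)) * ((mm b.1 - mm a.1 : ℤ):ℝ) := by
      rw [← Int.cast_sum, L1 a.2 b.2 h1 h2]; push_cast; ring
    have hy : ∑ p ∈ PF n, ((ind (actZ p a.1) (actZ p b.1) : ℤ):ℝ)
        = ((n:ℝ)^2-4*(n:ℝ)+2) * ((ind a.1 b.1 : ℤ):ℝ) + (2*(n:ℝ)-1)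
            - ((mm b.1 - mm a.1 : ℤ):ℝ) := by
      rw [← Int.cast_sum, L2 a.2 b.2 h1 h2]; push_cast; ring
    rw [hrec, Finset.sum_mul, Finset.sum_congr rfl hsummand]
    simp only [Finset.sum_add_distrib, Finset.sum_sub_distrib, ← Finset.mul_sum,
      Finset.sum_const, card_PF, nsmul_eq_mul, hx, hy]
    push_cast
    ring

theorem prob_inversion_reflections_B (n t : ℕ) (hn : 2 ≤ n)
    (i j : SIdx n) (hij : |i.1| < j.1) :
    BProbGt n t i j =
      1 / 2
      - ((j.1 - i.1 - 1 + i.1.sign : ℤ) : ℝ) / (2 * ((n : ℝ) - 1)) * (1 - 2 / n) ^ t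
      + (((j.1 - i.1 - 1 + i.1.sign : ℤ) : ℝ) / (2 * ((n : ℝ) - 1)) - 1 / 2) *
          (1 - 4 / n + 2 / (n : ℝ) ^ 2) ^ t := by
  have hi1 : i.1 < j.1 := lt_of_le_of_lt (le_abs_self _) hij
  have hi2 : -i.1 < j.1 := lt_of_le_of_lt (neg_le_abs _) hij
  have hj0 : 0 < j.1 := lt_of_le_of_lt (abs_nonneg _) hij
  have hi0 : i.1 ≠ 0 := val_nonzero i
  have hne1 : i.1 ≠ j.1 := by omega
  have hne2 : i.1 ≠ -j.1 := by omega
  have hmm : ((mm j.1 - mm i.1 : ℤ) : ℝ) = ((j.1 - i.1 - 1 + i.1.sign : ℤ) : ℝ) := by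
    congr 1
    unfold mm
    rcases lt_trichotomy 0 i.1 with h|h|h
    · rw [if_pos hj0, if_pos h, Int.sign_eq_one_of_pos h]; ring
    · exact absurd h.symm hi0
    · rw [if_pos hj0, if_neg (by omega), Int.sign_eq_neg_one_of_neg h]; ring
  have hind : ((ind i.1 j.1 : ℤ) : ℝ) = 0 := by rw [ind, if_neg (by omega)]; norm_num
  have hmain := main_formula hn t i j hne1 hne2
  rw [hmm, hind] at hmain
  have hcard : (Finset.univ.filter (fun π : Equiv.Perm (SIdx n) => π ∈ BRefl n)).card = n^2 := by
    rw [ReflF_eq_image, Finset.card_image_of_injOn permOf_injOn, card_PF]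
  have hBP : BProbGt n t i j
      = (EC n t i j : ℝ) /
        (((Finset.univ.filter (fun π : Equiv.Perm (SIdx n) => π ∈ BRefl n)).card : ℝ))^t := rfl
  rw [hBP, hcard]
  have hN2 : (2:ℝ) ≤ (n:ℝ) := by exact_mod_cast hn
  have hNne : (n:ℝ) ≠ 0 := by linarith
  have hN1 : (n:ℝ) - 1 ≠ 0 := by linarith
  have h2N1 : 2*((n:ℝ)-1) ≠ 0 := by intro h; apply hN1; linarith
  have hEC : (EC n t i j : ℝ) =
      (((n:ℝ)^2)^t * ((n:ℝ)-1)
      - ((n:ℝ)^2-2*(n:ℝ))^t * ((j.1 - i.1 - 1 + i.1.sign : ℤ) : ℝ)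
      + ((n:ℝ)^2-4*(n:ℝ)+2)^t *
          (2*((n:ℝ)-1)*(0:ℝ) - ((n:ℝ)-1) + ((j.1 - i.1 - 1 + i.1.sign : ℤ) : ℝ)))
        / (2*((n:ℝ)-1)) := by
    rw [eq_div_iff h2N1]
    exact hmain
  rw [hEC]
  have e1 : (1 - 2/(n:ℝ)) = ((n:ℝ)^2 - 2*(n:ℝ))/((n:ℝ)^2) := by field_simp
  have e2 : (1 - 4/(n:ℝ) + 2/(n:ℝ)^2) = ((n:ℝ)^2-4*(n:ℝ)+2)/(n:ℝ)^2 := by field_simp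
  rw [e1, e2, div_pow, div_pow]
  have hpt : (((n:ℝ)^2)^t) ≠ 0 := pow_ne_zero _ (by positivity)
  push_cast
  field_simp
  ring
end Aux
end

section
/- Let π be a product of t independent uniformly random reflections in B_n, n ≥ 1. For 1 ≤ i ≤ n, P(π(-i) > π(i)) = 1/2 - (1/2)(1 - 2/n)^t. -/
open Classical

namespace BnAux

variable {n : ℕ}

@[simp] lemma negIdx_val (a : SIdx n) : (negIdx a).1 = -a.1 := rfl

lemma val_ne_zero (a : SIdx n) : a.1 ≠ 0 := by
  have h := a.2
  simp only [signedIdxF, Finset.mem_erase, Finset.mem_Icc] at h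
  exact h.1

lemma val_bounds (a : SIdx n) : -(n:ℤ) ≤ a.1 ∧ a.1 ≤ n := by
  have h := a.2
  simp only [signedIdxF, Finset.mem_erase, Finset.mem_Icc] at h
  exact h.2

lemma eq_iff {a b : SIdx n} : a = b ↔ a.1 = b.1 := Subtype.ext_iff

lemma ne_of_val {a b : SIdx n} (h : a.1 ≠ b.1) : a ≠ b := fun e => h (by rw [e])

@[simp] lemma negIdx_negIdx (a : SIdx n) : negIdx (negIdx a) = a := by
  apply eq_iff.2; simp

lemma negIdx_inj {a b : SIdx n} (h : negIdx a = negIdx b) : a = b := by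
  have := congrArg negIdx h; simpa using this

lemma ne_negIdx_self (a : SIdx n) : a ≠ negIdx a := by
  apply ne_of_val; have := val_ne_zero a; simp; omega

lemma ne_negIdx_symm {a b : SIdx n} (h : a ≠ negIdx b) : b ≠ negIdx a := by
  intro e; exact h (by rw [e, negIdx_negIdx])

lemma swap_neg_apply (a b x : SIdx n) :
    Equiv.swap (negIdx a) (negIdx b) (negIdx x) = negIdx (Equiv.swap a b x) := by
  rcases eq_or_ne x a with rfl | ha
  · simp
  · rcases eq_or_ne x b with rfl | hb
    · simp
    · rw [Equiv.swap_apply_of_ne_of_ne ha hb, Equiv.swap_apply_of_ne_of_ne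
        (fun h => ha (negIdx_inj h)) (fun h => hb (negIdx_inj h))]

lemma swap_neg_apply' (a b x : SIdx n) :
    Equiv.swap a b (negIdx x) = negIdx (Equiv.swap (negIdx a) (negIdx b) x) := by
  have := swap_neg_apply (negIdx a) (negIdx b) x
  simpa using this

lemma swap_disjoint {a b : SIdx n} (h1 : a ≠ b) (h2 : a ≠ negIdx b) :
    (Equiv.swap a b).Disjoint (Equiv.swap (negIdx a) (negIdx b)) := by
  intro x
  by_cases hxa : x = a
  · subst hxa
    right
    exact Equiv.swap_apply_of_ne_of_ne (ne_negIdx_self x) h2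
  by_cases hxb : x = b
  · subst hxb
    right
    exact Equiv.swap_apply_of_ne_of_ne (ne_negIdx_symm h2) (ne_negIdx_self x)
  · left; exact Equiv.swap_apply_of_ne_of_ne hxa hxb

lemma swap_mul_comm {a b : SIdx n} (h1 : a ≠ b) (h2 : a ≠ negIdx b) :
    Equiv.swap a b * Equiv.swap (negIdx a) (negIdx b)
      = Equiv.swap (negIdx a) (negIdx b) * Equiv.swap a b :=
  (swap_disjoint h1 h2).commute.eq

/-- canonical type-1 reflection -/
def refl1 (a b : SIdx n) : Equiv.Perm (SIdx n) :=
  Equiv.swap a b * Equiv.swap (negIdx a) (negIdx b)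

/-- canonical type-2 reflection -/
def refl2 (a : SIdx n) : Equiv.Perm (SIdx n) := Equiv.swap a (negIdx a)

lemma refl1_mem {a b : SIdx n} (h1 : a ≠ b) (h2 : a ≠ negIdx b) :
    refl1 a b ∈ BRefl n := Or.inl ⟨a, b, h1, h2, rfl⟩

lemma refl2_mem (a : SIdx n) : refl2 a ∈ BRefl n := Or.inr ⟨a, rfl⟩

lemma refl_neg_apply {r : Equiv.Perm (SIdx n)} (hr : r ∈ BRefl n) (x : SIdx n) :
    r (negIdx x) = negIdx (r x) := by
  rcases hr with ⟨a, b, hab, hab', rfl⟩ | ⟨a, rfl⟩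
  · simp only [Equiv.Perm.mul_apply]
    rw [swap_neg_apply, swap_neg_apply']
    have := congrArg (fun e : Equiv.Perm (SIdx n) => e x) (swap_mul_comm hab hab')
    simp only [Equiv.Perm.mul_apply] at this
    rw [← this]
  · have := swap_neg_apply a (negIdx a) x
    simpa [Equiv.swap_comm] using this

lemma prod_neg_apply : ∀ (l : List (Equiv.Perm (SIdx n))), (∀ r ∈ l, r ∈ BRefl n) →
    ∀ x : SIdx n, l.prod (negIdx x) = negIdx (l.prod x)
  | [], _, x => by simp
  | r :: l, h, x => by
    simp only [List.prod_cons, Equiv.Perm.mul_apply]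
    rw [prod_neg_apply l (fun s hs => h s (List.mem_cons_of_mem _ hs)) x,
      refl_neg_apply (h r List.mem_cons_self)]

lemma refl1_swap (a b : SIdx n) : refl1 b a = refl1 a b := by
  unfold refl1
  rw [Equiv.swap_comm b a, Equiv.swap_comm (negIdx b) (negIdx a)]

lemma refl1_negneg {a b : SIdx n} (h1 : a ≠ b) (h2 : a ≠ negIdx b) :
    refl1 (negIdx a) (negIdx b) = refl1 a b := by
  unfold refl1
  rw [negIdx_negIdx, negIdx_negIdx]
  exact (swap_mul_comm h1 h2).symm

lemma refl1_anti {a b : SIdx n} (h1 : a ≠ b) (h2 : a ≠ negIdx b) :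
    refl1 (negIdx b) (negIdx a) = refl1 a b := by
  rw [refl1_swap, refl1_negneg h1 h2]

lemma refl2_neg (a : SIdx n) : refl2 (negIdx a) = refl2 a := by
  unfold refl2
  rw [negIdx_negIdx, Equiv.swap_comm]

-- evaluation lemmas
lemma refl1_apply_left {a b : SIdx n} (h2 : a ≠ negIdx b) : refl1 a b a = b := by
  unfold refl1
  simp only [Equiv.Perm.mul_apply]
  rw [Equiv.swap_apply_of_ne_of_ne (ne_negIdx_self a) h2, Equiv.swap_apply_left]

lemma refl1_apply_right {a b : SIdx n} (h2 : a ≠ negIdx b) : refl1 a b b = a := by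
  unfold refl1
  simp only [Equiv.Perm.mul_apply]
  rw [Equiv.swap_apply_of_ne_of_ne (ne_negIdx_symm h2) (ne_negIdx_self b),
    Equiv.swap_apply_right]

lemma refl1_apply_negleft {a b : SIdx n} (h1 : a ≠ b) (h2 : a ≠ negIdx b) :
    refl1 a b (negIdx a) = negIdx b := by
  unfold refl1
  simp only [Equiv.Perm.mul_apply]
  rw [Equiv.swap_apply_left, Equiv.swap_apply_of_ne_of_ne h2.symm (ne_negIdx_self b).symm]

lemma refl1_apply_negright {a b : SIdx n} (h1 : a ≠ b) (h2 : a ≠ negIdx b) :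
    refl1 a b (negIdx b) = negIdx a := by
  unfold refl1
  simp only [Equiv.Perm.mul_apply]
  rw [Equiv.swap_apply_right, Equiv.swap_apply_of_ne_of_ne (ne_negIdx_self a).symm
    (ne_negIdx_symm h2).symm]

lemma refl1_apply_fix {a b x : SIdx n} (ha : x ≠ a) (hb : x ≠ b)
    (hna : x ≠ negIdx a) (hnb : x ≠ negIdx b) : refl1 a b x = x := by
  unfold refl1
  simp only [Equiv.Perm.mul_apply]
  rw [Equiv.swap_apply_of_ne_of_ne hna hnb, Equiv.swap_apply_of_ne_of_ne ha hb]

lemma refl2_apply_left (a : SIdx n) : refl2 a a = negIdx a := Equiv.swap_apply_left _ _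

lemma refl2_apply_fix {a x : SIdx n} (ha : x ≠ a) (hna : x ≠ negIdx a) : refl2 a x = x :=
  Equiv.swap_apply_of_ne_of_ne ha hna

lemma type1_norm {a b v : SIdx n} (hab : a ≠ b) (hab' : a ≠ negIdx b)
    (hv : refl1 a b v ≠ v) :
    ∃ b', b' ≠ v ∧ b' ≠ negIdx v ∧ refl1 a b = refl1 v b' := by
  by_cases h1 : v = a
  · subst h1; exact ⟨b, hab.symm, ne_negIdx_symm hab', rfl⟩
  by_cases h2 : v = b
  · subst h2
    exact ⟨a, hab, hab', (refl1_swap a v).symm⟩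
  by_cases h3 : v = negIdx a
  · subst h3
    exact ⟨negIdx b, fun h => hab (negIdx_inj h).symm, fun h => (ne_negIdx_symm hab') (negIdx_inj h),
      (refl1_negneg hab hab').symm⟩
  by_cases h4 : v = negIdx b
  · subst h4
    exact ⟨negIdx a, fun h => hab (negIdx_inj h), fun h => hab' (negIdx_inj h),
      (refl1_anti hab hab').symm⟩
  · exact absurd (refl1_apply_fix h1 h2 h3 h4) hv

lemma fiber_eq (v z : SIdx n) (hvz : v ≠ z) :
    (Finset.univ.filter (fun r : Equiv.Perm (SIdx n) => r ∈ BRefl n ∧ r v = z))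
      = {if z = negIdx v then refl2 v else refl1 v z} := by
  ext r
  simp only [Finset.mem_filter, Finset.mem_univ, true_and, Finset.mem_singleton]
  constructor
  · rintro ⟨hr, hv⟩
    rcases hr with ⟨a, b, hab, hab', rfl⟩ | ⟨a, rfl⟩
    · have hv' : refl1 a b v = z := hv
      have hmv : refl1 a b v ≠ v := by rw [hv']; exact hvz.symm
      obtain ⟨b', hb1, hb2, heq⟩ := type1_norm hab hab' hmv
      have hz : b' = z := by
        rw [← hv', heq, refl1_apply_left (fun h => hb2 (by rw [h, negIdx_negIdx]))]
      subst hz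
      rw [if_neg hb2]
      exact heq
    · -- type 2
      have hmv : Equiv.swap a (negIdx a) v ≠ v := by rw [hv]; exact hvz.symm
      have hv' : v = a ∨ v = negIdx a := by
        by_contra h
        push_neg at h
        exact hmv (Equiv.swap_apply_of_ne_of_ne h.1 h.2)
      have hz : z = negIdx v ∧ Equiv.swap a (negIdx a) = refl2 v := by
        rcases hv' with rfl | rfl
        · constructor
          · rw [← hv, Equiv.swap_apply_left]
          · rfl
        · constructor
          · rw [← hv, Equiv.swap_apply_right, negIdx_negIdx]
          · unfold refl2; rw [negIdx_negIdx, Equiv.swap_comm]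
      rw [if_pos hz.1]
      exact hz.2
  · intro h
    by_cases hz : z = negIdx v
    · rw [if_pos hz] at h
      subst h; subst hz
      exact ⟨refl2_mem v, refl2_apply_left v⟩
    · rw [if_neg hz] at h
      subst h
      have h2 : v ≠ negIdx z := fun h => hz (by rw [h, negIdx_negIdx])
      exact ⟨refl1_mem hvz h2, refl1_apply_left h2⟩

noncomputable def phiC (i j : SIdx n) : Equiv.Perm (SIdx n) :=
  if i.1 = j.1 then refl2 i else if i.1 < j.1 then refl1 i j else refl1 i (negIdx j)

lemma phiC_mem {i j : SIdx n} (hi : 0 < i.1) (hj : 0 < j.1) : phiC i j ∈ BRefl n := by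
  unfold phiC
  split_ifs with h h'
  · exact refl2_mem i
  · exact refl1_mem (ne_of_val h) (ne_of_val (by simp; omega))
  · exact refl1_mem (ne_of_val (by simp; omega)) (by rw [negIdx_negIdx]; exact ne_of_val h)

lemma phiC_apply_left {i j : SIdx n} (hi : 0 < i.1) (hj : 0 < j.1) :
    phiC i j i = if i.1 = j.1 then negIdx i else if i.1 < j.1 then j else negIdx j := by
  unfold phiC
  split_ifs with h h'
  · exact refl2_apply_left i
  · exact refl1_apply_left (ne_of_val (by simp; omega))
  · exact refl1_apply_left (by rw [negIdx_negIdx]; exact ne_of_val h)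

lemma phiC_apply_right {i j : SIdx n} (hi : 0 < i.1) (hj : 0 < j.1) :
    phiC i j j = if i.1 = j.1 then negIdx i else if i.1 < j.1 then i else negIdx i := by
  unfold phiC
  split_ifs with h h'
  · rw [show j = i from eq_iff.2 h.symm]; exact refl2_apply_left i
  · exact refl1_apply_right (ne_of_val (by simp; omega))
  · have h2 : i ≠ negIdx (negIdx j) := by rw [negIdx_negIdx]; exact ne_of_val h
    have := refl1_apply_negright (a := i) (b := negIdx j)
      (ne_of_val (by simp; omega)) h2
    rwa [negIdx_negIdx] at this

lemma phiC_fix {i j x : SIdx n} (hi : 0 < i.1) (hj : 0 < j.1) (hx : 0 < x.1)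
    (h1 : x.1 ≠ i.1) (h2 : x.1 ≠ j.1) : phiC i j x = x := by
  unfold phiC
  split_ifs with h h'
  · exact refl2_apply_fix (ne_of_val h1) (ne_of_val (by simp; omega))
  · exact refl1_apply_fix (ne_of_val h1) (ne_of_val h2)
      (ne_of_val (by simp; omega)) (ne_of_val (by simp; omega))
  · exact refl1_apply_fix (ne_of_val h1) (ne_of_val (by simp; omega))
      (ne_of_val (by simp; omega)) (by rw [negIdx_negIdx]; exact ne_of_val h2)

lemma phiC_moved {i j : SIdx n} (hi : 0 < i.1) (hj : 0 < j.1) :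
    phiC i j i ≠ i ∧ phiC i j j ≠ j := by
  rw [phiC_apply_left hi hj, phiC_apply_right hi hj]
  constructor <;> (split_ifs with h h' <;> apply ne_of_val <;> simp only [negIdx_val, ne_eq] <;> omega)

lemma phiC_inj {i j i' j' : SIdx n} (hi : 0 < i.1) (hj : 0 < j.1) (hi' : 0 < i'.1)
    (hj' : 0 < j'.1) (h : phiC i j = phiC i' j') : i = i' ∧ j = j' := by
  have mv := phiC_moved hi hj
  have mv' := phiC_moved hi' hj'
  have mem1 : i.1 = i'.1 ∨ i.1 = j'.1 := by
    by_contra hc; push_neg at hc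
    have hfix := phiC_fix hi' hj' hi hc.1 hc.2
    rw [← h] at hfix
    exact mv.1 hfix
  have mem2 : j.1 = i'.1 ∨ j.1 = j'.1 := by
    by_contra hc; push_neg at hc
    have hfix := phiC_fix hi' hj' hj hc.1 hc.2
    rw [← h] at hfix
    exact mv.2 hfix
  have mem1' : i'.1 = i.1 ∨ i'.1 = j.1 := by
    by_contra hc; push_neg at hc
    have hfix := phiC_fix hi hj hi' hc.1 hc.2
    rw [h] at hfix
    exact mv'.1 hfix
  have mem2' : j'.1 = i.1 ∨ j'.1 = j.1 := by
    by_contra hc; push_neg at hc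
    have hfix := phiC_fix hi hj hj' hc.1 hc.2
    rw [h] at hfix
    exact mv'.2 hfix
  by_cases hcross : i.1 = j'.1 ∧ j.1 = i'.1 ∧ i.1 ≠ j.1
  · exfalso
    obtain ⟨e1, e2, hd⟩ := hcross
    have hij' : i = j' := eq_iff.2 e1
    have hval : (if i.1 = j.1 then negIdx i else if i.1 < j.1 then j else negIdx j).1
        = (if i'.1 = j'.1 then negIdx i' else if i'.1 < j'.1 then i' else negIdx i').1 := by
      rw [← phiC_apply_left hi hj, ← phiC_apply_right hi' hj', h, hij']
    split_ifs at hval <;> (try simp only [negIdx_val] at hval) <;> omega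
  · exact ⟨eq_iff.2 (by omega), eq_iff.2 (by omega)⟩

lemma phiC_surj_t1 {a b : SIdx n} (ha : 0 < a.1) (h1 : a ≠ b) (h2 : a ≠ negIdx b) :
    ∃ i j : SIdx n, 0 < i.1 ∧ 0 < j.1 ∧ phiC i j = refl1 a b := by
  have hv1 : a.1 ≠ b.1 := fun e => h1 (eq_iff.2 e)
  have hv2 : a.1 ≠ -b.1 := fun e => h2 (eq_iff.2 e)
  rcases lt_or_gt_of_ne (val_ne_zero b) with hb | hb
  · -- b.1 < 0
    have hcpos : 0 < (negIdx b).1 := by simp only [negIdx_val]; omega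
    rcases lt_or_gt_of_ne hv2 with hac | hac
    · refine ⟨negIdx b, a, hcpos, ha, ?_⟩
      rw [phiC, if_neg (by simp only [negIdx_val]; omega),
        if_neg (by simp only [negIdx_val]; omega)]
      exact refl1_anti h1 h2
    · refine ⟨a, negIdx b, ha, hcpos, ?_⟩
      rw [phiC, if_neg (by simp only [negIdx_val]; omega),
        if_neg (by simp only [negIdx_val]; omega), negIdx_negIdx]
  · -- 0 < b.1
    rcases lt_or_gt_of_ne hv1 with hab | hab
    · exact ⟨a, b, ha, hb, by rw [phiC, if_neg hv1, if_pos hab]⟩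
    · exact ⟨b, a, hb, ha, by rw [phiC, if_neg (by omega), if_pos (by omega), refl1_swap]⟩

lemma phiC_surj {r : Equiv.Perm (SIdx n)} (hr : r ∈ BRefl n) :
    ∃ i j : SIdx n, 0 < i.1 ∧ 0 < j.1 ∧ phiC i j = r := by
  rcases hr with ⟨a, b, h1, h2, rfl⟩ | ⟨a, rfl⟩
  · show ∃ i j : SIdx n, 0 < i.1 ∧ 0 < j.1 ∧ phiC i j = refl1 a b
    rcases lt_or_gt_of_ne (val_ne_zero a) with hb | hb
    · have h1' : negIdx a ≠ negIdx b := fun e => h1 (negIdx_inj e)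
      have h2' : negIdx a ≠ negIdx (negIdx b) := by
        rw [negIdx_negIdx]; exact (ne_negIdx_symm h2).symm
      obtain ⟨i, j, hi, hj, he⟩ := phiC_surj_t1 (a := negIdx a) (b := negIdx b)
        (by simp only [negIdx_val]; omega) h1' h2'
      exact ⟨i, j, hi, hj, by rw [he, refl1_negneg h1 h2]⟩
    · exact phiC_surj_t1 hb h1 h2
  · show ∃ i j : SIdx n, 0 < i.1 ∧ 0 < j.1 ∧ phiC i j = refl2 a
    rcases lt_or_gt_of_ne (val_ne_zero a) with hb | hb
    · have hpos : 0 < (negIdx a).1 := by simp only [negIdx_val]; omega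
      exact ⟨negIdx a, negIdx a, hpos, hpos, by rw [phiC, if_pos rfl, refl2_neg]⟩
    · exact ⟨a, a, hb, hb, by rw [phiC, if_pos rfl]⟩

def mkP {n : ℕ} (x : ℤ) (hx : x ∈ Finset.Icc (1:ℤ) (n:ℤ)) : SIdx n :=
  ⟨x, by simp only [signedIdxF, Finset.mem_erase, Finset.mem_Icc] at hx ⊢; omega⟩

@[simp] lemma mkP_val {x : ℤ} (hx : x ∈ Finset.Icc (1:ℤ) (n:ℤ)) : (mkP x hx).1 = x := rfl

lemma mkP_pos {x : ℤ} (hx : x ∈ Finset.Icc (1:ℤ) (n:ℤ)) : 0 < (mkP x hx).1 := by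
  simp only [mkP_val]; exact lt_of_lt_of_le one_pos (Finset.mem_Icc.mp hx).1 |>.trans_le le_rfl

lemma card_BRefl :
    (Finset.univ.filter (fun r : Equiv.Perm (SIdx n) => r ∈ BRefl n)).card = n ^ 2 := by
  have hI : ((Finset.Icc (1:ℤ) (n:ℤ)) ×ˢ (Finset.Icc (1:ℤ) (n:ℤ))).card = n ^ 2 := by
    rw [Finset.card_product, Int.card_Icc]
    simp [sq]
  rw [← hI]
  refine (Finset.card_bij
    (fun (p : ℤ × ℤ) hp => phiC (mkP p.1 (Finset.mem_product.mp hp).1)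
      (mkP p.2 (Finset.mem_product.mp hp).2)) ?_ ?_ ?_).symm
  · intro p hp
    simp only [Finset.mem_filter, Finset.mem_univ, true_and]
    exact phiC_mem (mkP_pos _) (mkP_pos _)
  · intro p hp q hq he
    have := phiC_inj (mkP_pos _) (mkP_pos _) (mkP_pos _) (mkP_pos _) he
    have e1 := congrArg Subtype.val this.1
    have e2 := congrArg Subtype.val this.2
    simp only [mkP_val] at e1 e2
    exact Prod.ext e1 e2
  · intro r hr
    simp only [Finset.mem_filter, Finset.mem_univ, true_and] at hr
    obtain ⟨i, j, hi, hj, he⟩ := phiC_surj hr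
    have hbi := val_bounds i
    have hbj := val_bounds j
    refine ⟨(i.1, j.1), Finset.mem_product.mpr ⟨Finset.mem_Icc.mpr ⟨by omega, by omega⟩,
      Finset.mem_Icc.mpr ⟨by omega, by omega⟩⟩, ?_⟩
    show phiC (mkP (i.1, j.1).1 _) (mkP (i.1, j.1).2 _) = r
    rw [show mkP (i.1, j.1).1 _ = i from Subtype.ext rfl,
      show mkP (i.1, j.1).2 _ = j from Subtype.ext rfl]
    exact he

lemma card_targets (v : SIdx n) :
    (Finset.univ.filter (fun z : SIdx n => z.1 * v.1 < 0)).card = n := by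
  rw [Finset.univ_eq_attach, Finset.filter_attach (fun x : ℤ => x * v.1 < 0),
    Finset.card_map, Finset.card_attach]
  rcases lt_or_gt_of_ne (val_ne_zero v) with hv | hv
  · rw [show (signedIdxF n).filter (fun x : ℤ => x * v.1 < 0) = Finset.Icc (1:ℤ) (n:ℤ) from ?_]
    · rw [Int.card_Icc]; simp
    · ext x
      simp only [signedIdxF, Finset.mem_filter, Finset.mem_erase, Finset.mem_Icc, mul_neg_iff]
      omega
  · rw [show (signedIdxF n).filter (fun x : ℤ => x * v.1 < 0) = Finset.Icc (-(n:ℤ)) (-1) from ?_]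
    · rw [Int.card_Icc]; simp
    · ext x
      simp only [signedIdxF, Finset.mem_filter, Finset.mem_erase, Finset.mem_Icc, mul_neg_iff]
      omega

lemma card_flip_opp (v : SIdx n) :
    (Finset.univ.filter (fun r : Equiv.Perm (SIdx n) =>
      r ∈ BRefl n ∧ (r v).1 * v.1 < 0)).card = n := by
  rw [Finset.card_eq_sum_card_fiberwise (f := fun r => r v)
      (t := Finset.univ.filter (fun z : SIdx n => z.1 * v.1 < 0))
      (fun r hr => by
        simp only [Finset.mem_coe, Finset.mem_filter, Finset.mem_univ, true_and] at hr ⊢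
        exact hr.2)]
  have hterm : ∀ z ∈ Finset.univ.filter (fun z : SIdx n => z.1 * v.1 < 0),
      ((Finset.univ.filter (fun r : Equiv.Perm (SIdx n) =>
        r ∈ BRefl n ∧ (r v).1 * v.1 < 0)).filter (fun r => r v = z)).card = 1 := by
    intro z hz
    simp only [Finset.mem_filter, Finset.mem_univ, true_and] at hz
    have hvz : v ≠ z := by
      intro e
      rw [← e] at hz
      nlinarith [mul_self_nonneg v.1]
    have hfe : (Finset.univ.filter (fun r : Equiv.Perm (SIdx n) =>
          r ∈ BRefl n ∧ (r v).1 * v.1 < 0)).filter (fun r => r v = z)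
        = Finset.univ.filter (fun r : Equiv.Perm (SIdx n) => r ∈ BRefl n ∧ r v = z) := by
      rw [Finset.filter_filter]
      apply Finset.filter_congr
      intro r _
      constructor
      · rintro ⟨⟨hB, _⟩, he⟩; exact ⟨hB, he⟩
      · rintro ⟨hB, he⟩; exact ⟨⟨hB, by rw [he]; exact hz⟩, he⟩
    rw [hfe, fiber_eq v z hvz, Finset.card_singleton]
  rw [Finset.sum_congr rfl hterm, Finset.sum_const, smul_eq_mul, mul_one, card_targets v]

lemma card_flip_of_pos (v : SIdx n) (hv : 0 < v.1) :
    (Finset.univ.filter (fun r : Equiv.Perm (SIdx n) =>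
      r ∈ BRefl n ∧ (r v).1 < 0)).card = n := by
  have he : (Finset.univ.filter (fun r : Equiv.Perm (SIdx n) => r ∈ BRefl n ∧ (r v).1 < 0))
      = Finset.univ.filter (fun r : Equiv.Perm (SIdx n) =>
          r ∈ BRefl n ∧ (r v).1 * v.1 < 0) := by
    apply Finset.filter_congr
    intro r _
    apply and_congr_right
    intro _
    rw [mul_neg_iff]
    constructor
    · intro h; right; exact ⟨h, hv⟩
    · rintro (⟨_, h⟩ | ⟨h, _⟩) <;> omega
  rw [he, card_flip_opp]

lemma card_flip_of_neg (v : SIdx n) (hv : v.1 < 0) :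
    (Finset.univ.filter (fun r : Equiv.Perm (SIdx n) =>
      r ∈ BRefl n ∧ (r v).1 < 0)).card = n ^ 2 - n := by
  have key := Finset.card_filter_add_card_filter_not
    (s := Finset.univ.filter (fun r : Equiv.Perm (SIdx n) => r ∈ BRefl n))
    (p := fun r => (r v).1 < 0)
  rw [card_BRefl, Finset.filter_filter, Finset.filter_filter] at key
  have he : (Finset.univ.filter (fun r : Equiv.Perm (SIdx n) => r ∈ BRefl n ∧ ¬ (r v).1 < 0))
      = Finset.univ.filter (fun r : Equiv.Perm (SIdx n) =>
          r ∈ BRefl n ∧ (r v).1 * v.1 < 0) := by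
    apply Finset.filter_congr
    intro r _
    apply and_congr_right
    intro _
    have := val_ne_zero (r v)
    rw [mul_neg_iff]
    constructor
    · intro h; left; exact ⟨by omega, hv⟩
    · rintro (⟨h, _⟩ | ⟨_, h⟩) <;> omega
  rw [he, card_flip_opp] at key
  omega

noncomputable def Cnt (n t : ℕ) (x : SIdx n) : ℕ :=
  (Finset.univ.filter (fun f : Fin t → Equiv.Perm (SIdx n) =>
    (∀ k, f k ∈ BRefl n) ∧ ((List.ofFn f).prod x).1 < 0)).card

lemma valid_card (t : ℕ) :
    (Finset.univ.filter (fun f : Fin t → Equiv.Perm (SIdx n) =>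
      ∀ k, f k ∈ BRefl n)).card = (n^2)^t := by
  have he : Finset.univ.filter (fun f : Fin t → Equiv.Perm (SIdx n) => ∀ k, f k ∈ BRefl n)
      = Fintype.piFinset (fun _ : Fin t =>
          Finset.univ.filter (fun r : Equiv.Perm (SIdx n) => r ∈ BRefl n)) := by
    ext f
    simp [Fintype.mem_piFinset]
  rw [he, Fintype.card_piFinset]
  simp [card_BRefl]

lemma Cnt_le (t : ℕ) (x : SIdx n) : Cnt n t x ≤ (n^2)^t := by
  rw [← valid_card t]
  exact Finset.card_le_card (fun f hf => by
    simp only [Finset.mem_filter] at hf ⊢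
    exact ⟨hf.1, hf.2.1⟩)

lemma Cnt_succ (t : ℕ) (x : SIdx n) :
    Cnt n (t+1) x = (n^2 - n) * Cnt n t x + n * ((n^2)^t - Cnt n t x) := by
  have key : ∀ f : Fin (t+1) → Equiv.Perm (SIdx n),
      (List.ofFn f).prod = f 0 * (List.ofFn (fun k : Fin t => f k.succ)).prod := by
    intro f; rw [List.ofFn_succ]; rfl
  have h1 : Cnt n (t+1) x = (Finset.univ.filter
      (fun q : Equiv.Perm (SIdx n) × (Fin t → Equiv.Perm (SIdx n)) =>
        (q.1 ∈ BRefl n ∧ ∀ k, q.2 k ∈ BRefl n)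
          ∧ (q.1 ((List.ofFn q.2).prod x)).1 < 0)).card := by
    apply Finset.card_nbij' (i := fun f => (f 0, fun k => f k.succ))
      (j := fun q => Fin.cons q.1 q.2)
    · intro f hf
      simp only [Finset.mem_coe, Finset.mem_filter, Finset.mem_univ, true_and] at hf ⊢
      obtain ⟨hall, hlt⟩ := hf
      refine ⟨⟨hall 0, fun k => hall k.succ⟩, ?_⟩
      rw [key f] at hlt
      exact hlt
    · intro q hq
      simp only [Finset.mem_coe, Finset.mem_filter, Finset.mem_univ, true_and] at hq ⊢
      obtain ⟨⟨h0, hall⟩, hlt⟩ := hq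
      constructor
      · intro k
        refine Fin.cases ?_ ?_ k
        · simpa using h0
        · intro k'; simpa using hall k'
      · rw [key]
        simpa using hlt
    · intro f _
      exact Fin.cons_self_tail f
    · intro q _
      refine Prod.ext ?_ ?_
      · simp
      · funext k; simp
  rw [h1, Finset.card_filter, ← Finset.univ_product_univ, Finset.sum_product_right]
  have h2 : ∀ g : Fin t → Equiv.Perm (SIdx n),
      (∑ r : Equiv.Perm (SIdx n), if ((r ∈ BRefl n ∧ ∀ k, g k ∈ BRefl n)
          ∧ (r ((List.ofFn g).prod x)).1 < 0) then 1 else 0)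
        = if (∀ k, g k ∈ BRefl n)
            then (if ((List.ofFn g).prod x).1 < 0 then n^2 - n else n) else 0 := by
    intro g
    rw [← Finset.card_filter]
    by_cases hg : ∀ k, g k ∈ BRefl n
    · rw [if_pos hg]
      have he : Finset.univ.filter (fun r : Equiv.Perm (SIdx n) =>
            (r ∈ BRefl n ∧ ∀ k, g k ∈ BRefl n) ∧ (r ((List.ofFn g).prod x)).1 < 0)
          = Finset.univ.filter (fun r : Equiv.Perm (SIdx n) =>
              r ∈ BRefl n ∧ (r ((List.ofFn g).prod x)).1 < 0) := by
        apply Finset.filter_congr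
        intro r _
        tauto
      rw [he]
      rcases lt_or_gt_of_ne (val_ne_zero ((List.ofFn g).prod x)) with hy | hy
      · rw [if_pos hy, card_flip_of_neg _ hy]
      · rw [if_neg (by omega), card_flip_of_pos _ hy]
    · rw [if_neg hg, Finset.card_eq_zero.2]
      rw [Finset.filter_eq_empty_iff]
      intro r _
      tauto
  rw [Finset.sum_congr rfl (fun g _ => h2 g), ← Finset.sum_filter, Finset.sum_ite,
    Finset.sum_const, Finset.sum_const, smul_eq_mul, smul_eq_mul,
    Finset.filter_filter, Finset.filter_filter]
  have h3 := Finset.card_filter_add_card_filter_not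
    (s := Finset.univ.filter (fun f : Fin t → Equiv.Perm (SIdx n) => ∀ k, f k ∈ BRefl n))
    (p := fun g => ((List.ofFn g).prod x).1 < 0)
  rw [valid_card, Finset.filter_filter, Finset.filter_filter] at h3
  simp only [Cnt]
  have hb : (Finset.univ.filter (fun g : Fin t → Equiv.Perm (SIdx n) =>
      (∀ k, g k ∈ BRefl n) ∧ ¬ ((List.ofFn g).prod x).1 < 0)).card
      = (n^2)^t - (Finset.univ.filter (fun f : Fin t → Equiv.Perm (SIdx n) =>
        (∀ k, f k ∈ BRefl n) ∧ ((List.ofFn f).prod x).1 < 0)).card := by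
    exact Nat.eq_sub_of_add_eq' h3
  rw [hb]
  ring

lemma Cnt_formula (hn : 1 ≤ n) (x : SIdx n) (hx : 0 < x.1) (t : ℕ) :
    (Cnt n t x : ℝ) = ((n:ℝ)^2)^t * (1/2 - (1/2) * (1 - 2/(n:ℝ))^t) := by
  induction t with
  | zero =>
    have h0 : Cnt n 0 x = 0 := by
      rw [Cnt, Finset.card_eq_zero.2]
      rw [Finset.filter_eq_empty_iff]
      rintro f - ⟨-, hlt⟩
      simp only [List.ofFn_zero, List.prod_nil, Equiv.Perm.coe_one, id_eq] at hlt
      omega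
    rw [h0]
    norm_num
  | succ t ih =>
    have hle := Cnt_le (n := n) t x
    have hnn : n ≤ n^2 := Nat.le_self_pow (by norm_num) n
    have hn' : (n:ℝ) ≠ 0 := Nat.cast_ne_zero.2 (Nat.one_le_iff_ne_zero.mp hn)
    rw [Cnt_succ, Nat.cast_add, Nat.cast_mul, Nat.cast_mul, Nat.cast_sub hle,
      Nat.cast_sub hnn]
    push_cast
    rw [ih]
    have hw : (n:ℝ) * (2 / n) = 2 := by field_simp
    linear_combination (-(((n:ℝ)^2)^t * n * (1 - 2/(n:ℝ))^t)/2) * hw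

end BnAux

theorem prob_neg_inversion_reflections_B (n t : ℕ) (hn : 1 ≤ n)
    (i : SIdx n) (hi : 0 < i.1) :
    BProbGt n t (negIdx i) i = 1 / 2 - (1 / 2) * (1 - 2 / (n : ℝ)) ^ t := by
  have key : (Finset.univ.filter (fun f : Fin t → Equiv.Perm (SIdx n) =>
      (∀ k, f k ∈ BRefl n) ∧ ((List.ofFn f).prod i).1 < ((List.ofFn f).prod (negIdx i)).1))
      = Finset.univ.filter (fun f : Fin t → Equiv.Perm (SIdx n) =>
          (∀ k, f k ∈ BRefl n) ∧ ((List.ofFn f).prod i).1 < 0) := by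
    apply Finset.filter_congr
    intro f _
    apply and_congr_right
    intro hf
    have hmem : ∀ r ∈ List.ofFn f, r ∈ BRefl n := by
      intro r hr
      rw [List.mem_ofFn] at hr
      obtain ⟨k, rfl⟩ := hr
      exact hf k
    rw [BnAux.prod_neg_apply _ hmem i, BnAux.negIdx_val]
    omega
  unfold BProbGt
  rw [key, BnAux.card_BRefl]
  have hC : (Finset.univ.filter (fun f : Fin t → Equiv.Perm (SIdx n) =>
      (∀ k, f k ∈ BRefl n) ∧ ((List.ofFn f).prod i).1 < 0)).card = BnAux.Cnt n t i := rfl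
  rw [hC, BnAux.Cnt_formula hn i hi t]
  have hn' : (n:ℝ) ≠ 0 := Nat.cast_ne_zero.2 (Nat.one_le_iff_ne_zero.mp hn)
  push_cast
  exact mul_div_cancel_left₀ _ (pow_ne_zero _ (pow_ne_zero _ hn'))
end
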